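/- Let k ≥ 3, q ≥ 1, π ∈ 𝕊_{k−1}, and let C = {a₁,…,a_t} with t ≥ 2 be a good set for π. Then the distance coloring f : W^π_{k,q} → {0,1,…,k} determined by C is a well-defined Sperner labeling of G^π_{k,q}: f(x) ∈ L^π(x) ∪ {0} for every x ∈ W^π_{k,q}, and for every edge xy of G^π_{k,q} either f(x) = f(y) or 0 ∈ {f(x), f(y)}. -/

import Mathlib

open Finset

attribute [local instance] Classical.propDecidable

noncomputable section

/-- `π` is a permutation of `{1,…,k-1}` given in one-line notation
(`π p` is the entry at position `p`), normalized to `0` outside `[1,k-1]`. -/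
def OneLine (k : ℕ) (π : ℕ → ℕ) : Prop :=
  Set.BijOn π (Set.Icc 1 (k - 1)) (Set.Icc 1 (k - 1)) ∧
    ∀ p, p ∉ Set.Icc 1 (k - 1) → π p = 0

/-- The set `S(π)` of adjacent inversions of `π`:
those `i ∈ [1,k-2]` such that `i+1` appears before `i` in `π`. -/
def adjInvF (k : ℕ) (π : ℕ → ℕ) : Finset ℕ :=
  (Finset.Icc 1 (k - 2)).filter fun i =>
    ∃ p ∈ Finset.Icc 1 (k - 1), ∃ r ∈ Finset.Icc 1 (k - 1),
      p < r ∧ π p = i + 1 ∧ π r = i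

/-- `W^π_{k,q}`: weakly increasing `(k-1)`-tuples with entries in `[0,q-1]`
that are strictly increasing at every adjacent inversion of `π`
(vectors are functions `ℕ → ℕ` supported on `[1,k-1]`). -/
def W (k q : ℕ) (π : ℕ → ℕ) : Set (ℕ → ℕ) :=
  {v | (∀ i, i ∉ Finset.Icc 1 (k - 1) → v i = 0) ∧
       (∀ i ∈ Finset.Icc 1 (k - 1), v i ≤ q - 1) ∧
       (∀ i, 1 ≤ i → i + 1 ≤ k - 1 → v i ≤ v (i + 1)) ∧
       (∀ i ∈ adjInvF k π, v i < v (i + 1))}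

/-- `x + e_{π_a} + e_{π_{a+1}} + ⋯ + e_{π_{b-1}}`. -/
def shift (π : ℕ → ℕ) (a b : ℕ) (x : ℕ → ℕ) : ℕ → ℕ :=
  fun i => x i + if i ∈ (Finset.Icc a (b - 1)).image π then 1 else 0

/-- Adjacency in the graph `G^π_{k,q}`: one vertex is obtained from the other
by adding `e_{π_a} + ⋯ + e_{π_{b-1}}` for some `1 ≤ a < b ≤ k`. -/
def AdjRel (k : ℕ) (π : ℕ → ℕ) (x y : ℕ → ℕ) : Prop :=
  ∃ a b, 1 ≤ a ∧ a < b ∧ b ≤ k ∧ (y = shift π a b x ∨ x = shift π a b y)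

/-- The number of maximal blocks of consecutive integers of a finite set `T ⊆ ℕ`. -/
def numBlocks (T : Finset ℕ) : ℕ := (T.filter fun t => t + 1 ∉ T).card

/-- `cs_i(π)`: the number of pairs `1 ≤ a < b ≤ k` such that
`T_{a,b} = {π_a,…,π_{b-1}}` decomposes into exactly `i` maximal blocks
of consecutive integers. -/
def cs (k : ℕ) (π : ℕ → ℕ) (i : ℕ) : ℕ :=
  ((Finset.Icc 1 k ×ˢ Finset.Icc 1 k).filter fun p =>
    p.1 < p.2 ∧ numBlocks ((Finset.Icc p.1 (p.2 - 1)).image π) = i).card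

/-- For `i < j`, `{i,j}` is an edge of `G_π` iff `{i,i+1,…,j-1}` occurs as
a set of consecutive entries of `π`. -/
def GpiEdge (k : ℕ) (π : ℕ → ℕ) (i j : ℕ) : Prop :=
  ∃ a, 1 ≤ a ∧ a + (j - i) ≤ k ∧
    (Finset.Icc a (a + (j - i) - 1)).image π = Finset.Icc i (j - 1)

/-- Unordered adjacency in `G_π`. -/
def GpiAdjU (k : ℕ) (π : ℕ → ℕ) (i j : ℕ) : Prop :=
  (i < j ∧ GpiEdge k π i j) ∨ (j < i ∧ GpiEdge k π j i)

/-- The position of the value `v` in the one-line notation of `π`. -/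
def posOf (k : ℕ) (π : ℕ → ℕ) (v : ℕ) : ℕ :=
  if h : ((Finset.Icc 1 (k - 1)).filter fun t => π t = v).Nonempty then
    ((Finset.Icc 1 (k - 1)).filter fun t => π t = v).min' h
  else 0

/-- The rotation `r` on one-line permutations: if `π = π₁…π_{t-1}(k-1)π_{t+1}…π_{k-1}`,
then `r(π) = (π_{t+1}+1)…(π_{k-1}+1) 1 (π₁+1)…(π_{t-1}+1)`. -/
def rot (k : ℕ) (π : ℕ → ℕ) : ℕ → ℕ := fun p =>
  if p ∉ Finset.Icc 1 (k - 1) then 0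
  else if p < k - posOf k π (k - 1) then π (posOf k π (k - 1) + p) + 1
  else if p = k - posOf k π (k - 1) then 1
  else π (p - (k - posOf k π (k - 1))) + 1

/-- The reflection `s` on one-line permutations: if `π = π₁…π_{i-1} 1 π_{i+1}…π_{k-1}`,
then `s(π) = (k+1-π_{i-1})…(k+1-π₁) 1 (k+1-π_{k-1})…(k+1-π_{i+1})`. -/
def srefl (k : ℕ) (π : ℕ → ℕ) : ℕ → ℕ := fun p =>
  if p ∉ Finset.Icc 1 (k - 1) then 0
  else if p < posOf k π 1 then k + 1 - π (posOf k π 1 - p)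
  else if p = posOf k π 1 then 1
  else k + 1 - π (k + posOf k π 1 - p)

/-- The rotation `ρ` of the vertex set `{1,…,k}`. -/
def rotV (k i : ℕ) : ℕ := if i < k then i + 1 else 1

/-- The reflection `σ` of the vertex set `{1,…,k}`. -/
def sreflV (k i : ℕ) : ℕ := if i = 1 then 1 else k + 2 - i

/-- The maximal sorted family `(S₁,…,S_k)` associated with `σ`, `0`-indexed:
`sortedFam k σ (i-1) = S_i`. -/
def sortedFam (k : ℕ) (σ : ℕ → ℕ) : ℕ → Finset ℕ
  | 0 => insert 1 ((adjInvF k σ).image (· + 1))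
  | j + 1 => insert (σ (j + 1) + 1) ((sortedFam k σ j).erase (σ (j + 1)))

/-- `ear(π)`. -/
def ear (k : ℕ) (π : ℕ → ℕ) : ℕ :=
  ((Finset.Icc 1 (k - 2)).filter fun i => π (i + 1) = π i + 1 ∨ π i = π (i + 1) + 1).card
    + (({1, k - 1} : Finset ℕ) ∩ ({π 1, π (k - 1)} : Finset ℕ)).card

/-- `ε_i(π) = 1` if `i-1 ∈ S(π)` and `0` otherwise. -/
def eps (k : ℕ) (π : ℕ → ℕ) (i : ℕ) : ℕ := if i - 1 ∈ adjInvF k π then 1 else 0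

/-- Extension of a vector with the conventions `x_k = q-1` (`x₀ = 0` holds by
the normalization of vectors in `W^π_{k,q}`). -/
def xext (k q : ℕ) (x : ℕ → ℕ) (i : ℕ) : ℕ := if i = k then q - 1 else x i

/-- The label list `L^π(x) = {i ∈ [1,k] : x_{i-1} < x_i - ε_i(π)}`. -/
def labels (k q : ℕ) (π : ℕ → ℕ) (x : ℕ → ℕ) : Finset ℕ :=
  (Finset.Icc 1 k).filter fun i => xext k q x (i - 1) + eps k π i < xext k q x i

/-- A Sperner labeling of `G^π_{k,q}`. -/
def IsSperner (k q : ℕ) (π : ℕ → ℕ) (f : (ℕ → ℕ) → ℕ) : Prop :=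
  (∀ x ∈ W k q π, f x = 0 ∨ f x ∈ labels k q π x) ∧
  (∀ x ∈ W k q π, ∀ y ∈ W k q π, AdjRel k π x y → f x = f y ∨ f x = 0 ∨ f y = 0)

/-- The entry `w` appears between the entries `u` and `v` in `π`. -/
def Between (k : ℕ) (π : ℕ → ℕ) (u v w : ℕ) : Prop :=
  (posOf k π u < posOf k π w ∧ posOf k π w < posOf k π v) ∨
  (posOf k π v < posOf k π w ∧ posOf k π w < posOf k π u)

/-- A good set of colors for `π`. -/
def GoodSet (k : ℕ) (π : ℕ → ℕ) (C : Finset ℕ) : Prop :=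
  C ⊆ Finset.Icc 1 k ∧
  (∀ i ∈ C, ∀ j ∈ C, i ≠ j → ¬ GpiAdjU k π i j) ∧
  (∀ a ∈ C, ∀ b ∈ C, 1 < a → a < b → b < k →
      ((Between k π (a - 1) b a ∨ Between k π (a - 1) b (b - 1)) ∧
       (Between k π (b - 1) a (a - 1) ∨ Between k π (b - 1) a b))) ∧
  (1 ∈ C → ∀ b ∈ C, b ≠ 1 → Between k π 1 (b - 1) b) ∧
  (k ∈ C → ∀ b ∈ C, b ≠ k → Between k π b (k - 1) (b - 1))

/-- `x_a - x_{a-1} - ε_a(π)`, the `a`-th coordinate of the distance map `D`. -/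
def dval (k q : ℕ) (π : ℕ → ℕ) (x : ℕ → ℕ) (a : ℕ) : ℕ :=
  xext k q x a - xext k q x (a - 1) - eps k π a

/-- The distance coloring determined by a set of colors `C`:
`x` gets color `a ∈ C` if `dval x a` is the unique maximum of `dval x` on `C`,
and `0` otherwise. -/
def dcol (k q : ℕ) (π : ℕ → ℕ) (C : Finset ℕ) (x : ℕ → ℕ) : ℕ :=
  if h : ∃ a ∈ C, ∀ b ∈ C, b ≠ a → dval k q π x b < dval k q π x a then h.choose else 0

lemma mem_adjInvF_bounds {k : ℕ} {π : ℕ → ℕ} {i : ℕ} (h : i ∈ adjInvF k π) :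
    1 ≤ i ∧ i ≤ k - 2 := by
  unfold adjInvF at h
  simp only [Finset.mem_filter, Finset.mem_Icc] at h
  exact h.1

lemma mono_xext {k q : ℕ} {π : ℕ → ℕ} (hk : 3 ≤ k) {x : ℕ → ℕ} (hx : x ∈ W k q π) :
    ∀ j, 1 ≤ j → j ≤ k → xext k q x (j - 1) + eps k π j ≤ xext k q x j := by
  obtain ⟨h0, hle, hm, hs⟩ := hx
  intro j hj1 hjk
  by_cases hj : j = k
  · have e : eps k π j = 0 := by
      unfold eps; rw [if_neg]; intro h; have := mem_adjInvF_bounds h; omega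
    have h1 : xext k q x j = q - 1 := by unfold xext; rw [if_pos hj]
    have h2 : xext k q x (j - 1) = x (j - 1) := by unfold xext; rw [if_neg (by omega)]
    have h3 := hle (j - 1) (by rw [Finset.mem_Icc]; omega)
    omega
  · have h2 : xext k q x j = x j := by unfold xext; rw [if_neg hj]
    have h3 : xext k q x (j - 1) = x (j - 1) := by unfold xext; rw [if_neg (by omega)]
    by_cases hj2 : j = 1
    · subst hj2
      have e : eps k π 1 = 0 := by
        unfold eps; rw [if_neg]; intro h; have := mem_adjInvF_bounds h; omega
      have h4 : x (1 - 1) = 0 := h0 (1 - 1) (by rw [Finset.mem_Icc]; omega)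
      omega
    · by_cases he : j - 1 ∈ adjInvF k π
      · have e : eps k π j = 1 := by unfold eps; rw [if_pos he]
        have h5 := hs (j - 1) he
        have hj' : j - 1 + 1 = j := by omega
        rw [hj'] at h5
        omega
      · have e : eps k π j = 0 := by unfold eps; rw [if_neg he]
        have h5 := hm (j - 1) (by omega) (by omega)
        have hj' : j - 1 + 1 = j := by omega
        rw [hj'] at h5
        omega

lemma T_subset {k : ℕ} {π : ℕ → ℕ} (hπ : OneLine k π) {a b : ℕ} (ha : 1 ≤ a) (hb : b ≤ k) :
    ∀ s ∈ (Finset.Icc a (b - 1)).image π, 1 ≤ s ∧ s ≤ k - 1 := by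
  intro s hs
  obtain ⟨p, hp, rfl⟩ := Finset.mem_image.mp hs
  rw [Finset.mem_Icc] at hp
  have hmem : π p ∈ Set.Icc 1 (k - 1) := hπ.1.mapsTo (Set.mem_Icc.mpr (by omega))
  rw [Set.mem_Icc] at hmem
  exact hmem

lemma xext_shift {k q : ℕ} {π : ℕ → ℕ} (hk : 3 ≤ k) (hπ : OneLine k π) {a b : ℕ}
    (ha : 1 ≤ a) (hb : b ≤ k) (x : ℕ → ℕ) :
    ∀ j ≤ k, xext k q (shift π a b x) j
      = xext k q x j + (if j ∈ (Finset.Icc a (b - 1)).image π then 1 else 0) := by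
  intro j hj
  by_cases hjk : j = k
  · have hnk : k ∉ (Finset.Icc a (b - 1)).image π := by
      intro h; have := T_subset hπ ha hb _ h; omega
    rw [hjk]
    simp [xext, hnk]
  · simp [xext, shift, hjk]

lemma posOf_spec {k : ℕ} {π : ℕ → ℕ} (hπ : OneLine k π) {s : ℕ} (h1 : 1 ≤ s) (h2 : s ≤ k - 1) :
    posOf k π s ∈ Finset.Icc 1 (k - 1) ∧ π (posOf k π s) = s := by
  obtain ⟨p, hp, hps⟩ := hπ.1.surjOn (Set.mem_Icc.mpr ⟨h1, h2⟩)
  rw [Set.mem_Icc] at hp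
  have hne : ((Finset.Icc 1 (k - 1)).filter fun t => π t = s).Nonempty :=
    ⟨p, Finset.mem_filter.mpr ⟨Finset.mem_Icc.mpr ⟨hp.1, hp.2⟩, hps⟩⟩
  have hmem := Finset.min'_mem _ hne
  unfold posOf
  rw [dif_pos hne]
  exact ⟨(Finset.mem_filter.mp hmem).1, (Finset.mem_filter.mp hmem).2⟩

lemma posOf_eq {k : ℕ} {π : ℕ → ℕ} (hπ : OneLine k π) {p : ℕ}
    (hp : p ∈ Finset.Icc 1 (k - 1)) : posOf k π (π p) = p := by
  rw [Finset.mem_Icc] at hp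
  have hmem : π p ∈ Set.Icc 1 (k - 1) := hπ.1.mapsTo (Set.mem_Icc.mpr hp)
  rw [Set.mem_Icc] at hmem
  have h := posOf_spec hπ hmem.1 hmem.2
  have h1 := Finset.mem_Icc.mp h.1
  exact hπ.1.injOn (Set.mem_Icc.mpr h1) (Set.mem_Icc.mpr hp) h.2

lemma posOf_mem_interval {k : ℕ} {π : ℕ → ℕ} (hπ : OneLine k π) {a b s : ℕ} (ha : 1 ≤ a)
    (hb : b ≤ k) (hs : s ∈ (Finset.Icc a (b - 1)).image π) :
    posOf k π s ∈ Finset.Icc a (b - 1) := by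
  obtain ⟨p, hp, rfl⟩ := Finset.mem_image.mp hs
  have hp2 := Finset.mem_Icc.mp hp
  have hp' : p ∈ Finset.Icc 1 (k - 1) := Finset.mem_Icc.mpr ⟨by omega, by omega⟩
  rw [posOf_eq hπ hp']
  exact hp

lemma between_mem {k : ℕ} {π : ℕ → ℕ} (hπ : OneLine k π) {a b s t w : ℕ} (ha : 1 ≤ a)
    (hb : b ≤ k)
    (hs : posOf k π s ∈ Finset.Icc a (b - 1)) (ht : posOf k π t ∈ Finset.Icc a (b - 1))
    (hw : Between k π s t w) : w ∈ (Finset.Icc a (b - 1)).image π := by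
  rw [Finset.mem_Icc] at hs ht
  unfold Between at hw
  have hm : a ≤ posOf k π w ∧ posOf k π w ≤ b - 1 := by
    rcases hw with ⟨h1, h2⟩ | ⟨h1, h2⟩ <;> omega
  have hne : ((Finset.Icc 1 (k - 1)).filter fun t => π t = w).Nonempty := by
    by_contra h
    rw [Finset.not_nonempty_iff_eq_empty] at h
    have h0 : posOf k π w = 0 := by
      unfold posOf
      rw [dif_neg (by rw [h]; exact Finset.not_nonempty_empty)]
    omega
  have hmem := Finset.min'_mem _ hne
  have hval : π (posOf k π w) = w := by
    unfold posOf; rw [dif_pos hne]; exact (Finset.mem_filter.mp hmem).2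
  exact Finset.mem_image.mpr ⟨posOf k π w, Finset.mem_Icc.mpr hm, hval⟩

lemma core_lemma {k : ℕ} {π : ℕ → ℕ} (hk : 3 ≤ k) (hπ : OneLine k π) {C : Finset ℕ}
    (hC : GoodSet k π C) {u v a b : ℕ} (hu : u ∈ C) (hv : v ∈ C) (huv : u ≠ v)
    (ha : 1 ≤ a) (hb : b ≤ k)
    (h1 : u - 1 ∈ (Finset.Icc a (b - 1)).image π)
    (h2 : u ∉ (Finset.Icc a (b - 1)).image π)
    (h3 : v ∈ (Finset.Icc a (b - 1)).image π)
    (h4 : v - 1 ∉ (Finset.Icc a (b - 1)).image π) : False := by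
  obtain ⟨hCsub, hInd, hc3, hc4, hc5⟩ := hC
  have hub := T_subset hπ ha hb _ h1
  have hvb := T_subset hπ ha hb _ h3
  have P1 := posOf_mem_interval hπ ha hb h1
  have P3 := posOf_mem_interval hπ ha hb h3
  by_cases hukk : u = k
  · rw [hukk] at P1
    have hB := hc5 (by rw [← hukk]; exact hu) v hv (by omega)
    exact h4 (between_mem hπ ha hb P3 P1 hB)
  · by_cases hv1 : v = 1
    · subst hv1
      have hB := hc4 hv u hu (by omega)
      exact h2 (between_mem hπ ha hb P3 P1 hB)
    · rcases Nat.lt_or_ge u v with h | h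
      · rcases (hc3 u hu v hv (by omega) h (by omega)).1 with hB | hB
        · exact h2 (between_mem hπ ha hb P1 P3 hB)
        · exact h4 (between_mem hπ ha hb P1 P3 hB)
      · have hlt : v < u := by omega
        rcases (hc3 v hv u hu (by omega) hlt (by omega)).2 with hB | hB
        · exact h4 (between_mem hπ ha hb P1 P3 hB)
        · exact h2 (between_mem hπ ha hb P1 P3 hB)

lemma dval_shift {k q : ℕ} {π : ℕ → ℕ} (hk : 3 ≤ k) (hπ : OneLine k π) {a b : ℕ}
    (ha : 1 ≤ a) (hb : b ≤ k) {x : ℕ → ℕ}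
    (hxW : x ∈ W k q π) (hyW : shift π a b x ∈ W k q π) {j : ℕ} (hj1 : 1 ≤ j) (hjk : j ≤ k) :
    dval k q π (shift π a b x) j + (if j - 1 ∈ (Finset.Icc a (b - 1)).image π then 1 else 0)
      = dval k q π x j + (if j ∈ (Finset.Icc a (b - 1)).image π then 1 else 0) := by
  have e1 := xext_shift (q := q) hk hπ ha hb x j hjk
  have e2 := xext_shift (q := q) hk hπ ha hb x (j - 1) (by omega)
  have m1 := mono_xext hk hxW j hj1 hjk
  have m2 := mono_xext hk hyW j hj1 hjk
  simp only [dval]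
  split_ifs at e1 e2 ⊢ <;> omega

lemma edge_core {k q : ℕ} {π : ℕ → ℕ} (hk : 3 ≤ k) (hπ : OneLine k π) {C : Finset ℕ}
    (hC : GoodSet k π C) {x : ℕ → ℕ} {a b u v : ℕ}
    (hxW : x ∈ W k q π) (hyW : shift π a b x ∈ W k q π)
    (ha : 1 ≤ a) (hab : a < b) (hb : b ≤ k)
    (hu : u ∈ C) (hv : v ∈ C) (huv : u ≠ v)
    (hxu : ∀ c ∈ C, c ≠ u → dval k q π x c < dval k q π x u)
    (hyv : ∀ c ∈ C, c ≠ v → dval k q π (shift π a b x) c < dval k q π (shift π a b x) v) :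
    False := by
  have hub := Finset.mem_Icc.mp (hC.1 hu)
  have hvb := Finset.mem_Icc.mp (hC.1 hv)
  have hd1 := hxu v hv (Ne.symm huv)
  have hd2 := hyv u hu huv
  have r1 := dval_shift hk hπ ha hb hxW hyW hub.1 hub.2
  have r2 := dval_shift hk hπ ha hb hxW hyW hvb.1 hvb.2
  have b1 : (if u - 1 ∈ (Finset.Icc a (b - 1)).image π then (1 : ℕ) else 0) ≤ 1 := by
    split <;> omega
  have b2 : (if u ∈ (Finset.Icc a (b - 1)).image π then (1 : ℕ) else 0) ≤ 1 := by
    split <;> omega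
  have b3 : (if v ∈ (Finset.Icc a (b - 1)).image π then (1 : ℕ) else 0) ≤ 1 := by
    split <;> omega
  have b4 : (if v - 1 ∈ (Finset.Icc a (b - 1)).image π then (1 : ℕ) else 0) ≤ 1 := by
    split <;> omega
  have k1 : (if u - 1 ∈ (Finset.Icc a (b - 1)).image π then (1 : ℕ) else 0) = 1 := by omega
  have k2 : (if u ∈ (Finset.Icc a (b - 1)).image π then (1 : ℕ) else 0) = 0 := by omega
  have k3 : (if v ∈ (Finset.Icc a (b - 1)).image π then (1 : ℕ) else 0) = 1 := by omega
  have k4 : (if v - 1 ∈ (Finset.Icc a (b - 1)).image π then (1 : ℕ) else 0) = 0 := by omega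
  have m1 : u - 1 ∈ (Finset.Icc a (b - 1)).image π := by
    by_contra hcon; rw [if_neg hcon] at k1; exact absurd k1 (by omega)
  have m2 : u ∉ (Finset.Icc a (b - 1)).image π := by
    intro hcon; rw [if_pos hcon] at k2; exact absurd k2 (by omega)
  have m3 : v ∈ (Finset.Icc a (b - 1)).image π := by
    by_contra hcon; rw [if_neg hcon] at k3; exact absurd k3 (by omega)
  have m4 : v - 1 ∉ (Finset.Icc a (b - 1)).image π := by
    intro hcon; rw [if_pos hcon] at k4; exact absurd k4 (by omega)
  exact core_lemma hk hπ hC hu hv huv ha hb m1 m2 m3 m4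

theorem stmt15 (k q : ℕ) (hk : 3 ≤ k) (hq : 1 ≤ q) (π : ℕ → ℕ) (hπ : OneLine k π)
    (C : Finset ℕ) (hC2 : 2 ≤ C.card) (hC : GoodSet k π C) :
    IsSperner k q π (dcol k q π C) := by
  constructor
  · intro x hxW
    by_cases h : ∃ c ∈ C, ∀ d ∈ C, d ≠ c → dval k q π x d < dval k q π x c
    · right
      have ex : dcol k q π C x = h.choose := by unfold dcol; exact dif_pos h
      obtain ⟨hcC, hmax⟩ := h.choose_spec
      obtain ⟨d, hdC, hdne⟩ := Finset.exists_mem_ne (show 1 < C.card by omega) h.choose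
      have hlt := hmax d hdC hdne
      have hbnd := Finset.mem_Icc.mp (hC.1 hcC)
      rw [ex]
      simp only [labels, Finset.mem_filter, Finset.mem_Icc]
      refine ⟨⟨hbnd.1, hbnd.2⟩, ?_⟩
      generalize h.choose = c at hlt hbnd ⊢
      simp only [dval] at hlt
      omega
    · left
      unfold dcol; exact dif_neg h
  · intro x hxW y hyW hadj
    obtain ⟨a, b, ha, hab, hb, hcase⟩ := hadj
    by_cases hfx : ∃ c ∈ C, ∀ d ∈ C, d ≠ c → dval k q π x d < dval k q π x c
    · by_cases hfy : ∃ c ∈ C, ∀ d ∈ C, d ≠ c → dval k q π y d < dval k q π y c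
      · by_cases heq : dcol k q π C x = dcol k q π C y
        · exact Or.inl heq
        · exfalso
          have ex : dcol k q π C x = hfx.choose := by unfold dcol; exact dif_pos hfx
          have ey : dcol k q π C y = hfy.choose := by unfold dcol; exact dif_pos hfy
          obtain ⟨huC, hxu⟩ := hfx.choose_spec
          obtain ⟨hvC, hyv⟩ := hfy.choose_spec
          have hne : hfx.choose ≠ hfy.choose := by
            intro h; exact heq (by rw [ex, ey, h])
          rcases hcase with h | h
          · subst h
            exact edge_core hk hπ hC hxW hyW ha hab hb huC hvC hne hxu hyv
          · subst h
            exact edge_core hk hπ hC hyW hxW ha hab hb hvC huC hne.symm hyv hxu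
      · right; right; unfold dcol; exact dif_neg hfy
    · right; left; unfold dcol; exact dif_neg hfx

end
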